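/- Let O = ∑_P α_P P be an n-qubit observable and 𝒟 a distribution over n-qubit states invariant under single-qubit Hadamard and phase gates on each qubit. Then for any Pauli string P, E_{ρ∼𝒟}[Tr(Oρ)·Tr(Pρ)] = (2/3)^{|P|} · α_P · E_{ρ∼𝒟}[γ*(ρ_{dom(P)})], where γ*(σ) = 2^{-|dom(P)|} ∑_{Q∈{X,Y,Z}^⊗|dom(P)|} Tr(Qσ)². -/

import Mathlib

open scoped BigOperators
open Matrix MeasureTheory ComplexOrder

noncomputable instance matrixMeasurableSpace {m n : Type*} :
    MeasurableSpace (Matrix m n ℂ) := MeasurableSpace.pi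

/-- The four single-qubit Pauli matrices `I, X, Y, Z`. -/
noncomputable def pauli : Fin 4 → Matrix (Fin 2) (Fin 2) ℂ
  | 0 => 1
  | 1 => !![0, 1; 1, 0]
  | 2 => !![0, -Complex.I; Complex.I, 0]
  | 3 => !![1, 0; 0, -1]

/-- The `n`-qubit Pauli string `P₁ ⊗ ⋯ ⊗ Pₙ`. -/
noncomputable def pauliString {n : ℕ} (P : Fin n → Fin 4) :
    Matrix (Fin n → Fin 2) (Fin n → Fin 2) ℂ :=
  fun x y => ∏ i, pauli (P i) (x i) (y i)

/-- The support (set of qubits acted on nontrivially) of a Pauli string. -/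
def psupp {n : ℕ} (P : Fin n → Fin 4) : Finset (Fin n) :=
  Finset.univ.filter (fun i => P i ≠ 0)

/-- A single-qubit gate `U` embedded at qubit `i` of an `n`-qubit system. -/
noncomputable def embedAt {n : ℕ} (i : Fin n) (U : Matrix (Fin 2) (Fin 2) ℂ) :
    Matrix (Fin n → Fin 2) (Fin n → Fin 2) ℂ :=
  fun x y => U (x i) (y i) * ∏ j ∈ Finset.univ.erase i, (if x j = y j then 1 else 0)

/-- The Hadamard gate. -/
noncomputable def hadamardGate : Matrix (Fin 2) (Fin 2) ℂ :=
  (Real.sqrt 2 : ℂ)⁻¹ • !![1, 1; 1, -1]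

/-- The phase gate `S`. -/
noncomputable def phaseGate : Matrix (Fin 2) (Fin 2) ℂ :=
  !![1, 0; 0, Complex.I]

/-- The non-identity purity of the reduced state of `ρ` on `dom(P)`, expressed via
full-system traces: `γ*(ρ_{dom P}) = 2^{-|dom P|} ∑_{Q ∈ {X,Y,Z}^{dom P}} Tr(Qρ)²`,
where the sum ranges over Pauli strings `Q` supported exactly on `dom P` with
nontrivial single-qubit factors. -/
noncomputable def nonIdentityPurity {n : ℕ} (P : Fin n → Fin 4)
    (ρ : Matrix (Fin n → Fin 2) (Fin n → Fin 2) ℂ) : ℂ :=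
  (2 ^ (psupp P).card : ℂ)⁻¹ *
    ∑ Q : Fin n → Fin 4, if psupp Q = psupp P then ((pauliString Q * ρ).trace) ^ 2 else 0

/-! ### Auxiliary material -/

section Aux

abbrev MatN (n : ℕ) := Matrix (Fin n → Fin 2) (Fin n → Fin 2) ℂ

noncomputable def tensorFun {n : ℕ} (A : Fin n → Matrix (Fin 2) (Fin 2) ℂ) : MatN n :=
  fun x y => ∏ i, A i (x i) (y i)

lemma tensorFun_mul {n : ℕ} (A B : Fin n → Matrix (Fin 2) (Fin 2) ℂ) :
    tensorFun A * tensorFun B = tensorFun (fun i => A i * B i) := by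
  ext x y
  simp only [tensorFun, Matrix.mul_apply]
  rw [Fintype.prod_sum (fun i (j : Fin 2) => A i (x i) j * B i j (y i))]
  exact Finset.sum_congr rfl fun z _ => (Finset.prod_mul_distrib).symm

lemma tensorFun_conjTranspose {n : ℕ} (A : Fin n → Matrix (Fin 2) (Fin 2) ℂ) :
    (tensorFun A)ᴴ = tensorFun (fun i => (A i)ᴴ) := by
  ext x y
  simp [tensorFun, Matrix.conjTranspose_apply, map_prod]

lemma pauliString_eq {n : ℕ} (P : Fin n → Fin 4) :
    pauliString P = tensorFun (fun i => pauli (P i)) := rfl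

lemma embedAt_eq {n : ℕ} (i : Fin n) (U : Matrix (Fin 2) (Fin 2) ℂ) :
    embedAt i U = tensorFun (fun j => if j = i then U else 1) := by
  ext x y
  simp only [embedAt, tensorFun]
  rw [← Finset.prod_erase_mul (a := i) (h := Finset.mem_univ i), if_pos rfl, mul_comm]
  congr 1
  exact Finset.prod_congr rfl fun j hj => by
    rw [if_neg (Finset.mem_erase.mp hj).1, Matrix.one_apply]

lemma tensorFun_smul_at {n : ℕ} (A : Fin n → Matrix (Fin 2) (Fin 2) ℂ) (i : Fin n) (c : ℂ)
    (B : Matrix (Fin 2) (Fin 2) ℂ) :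
    tensorFun (Function.update A i (c • B)) = c • tensorFun (Function.update A i B) := by
  ext x y
  simp only [tensorFun, Matrix.smul_apply, smul_eq_mul]
  rw [← Finset.prod_erase_mul (a := i) (h := Finset.mem_univ i),
      ← Finset.prod_erase_mul (a := i) (h := Finset.mem_univ i)
        (f := fun j => Function.update A i B j (x j) (y j))]
  have h1 : ∀ j ∈ Finset.univ.erase i, Function.update A i (c • B) j (x j) (y j)
      = Function.update A i B j (x j) (y j) := fun j hj => by
    rw [Function.update_of_ne (Finset.mem_erase.mp hj).1,
      Function.update_of_ne (Finset.mem_erase.mp hj).1]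
  rw [Finset.prod_congr rfl h1, Function.update_self, Function.update_self, Matrix.smul_apply]
  simp only [smul_eq_mul]; ring

def hPerm : Fin 4 → Fin 4 | 0 => 0 | 1 => 3 | 2 => 2 | 3 => 1
noncomputable def hSign : Fin 4 → ℂ | 2 => -1 | _ => 1
def sPerm : Fin 4 → Fin 4 | 0 => 0 | 1 => 2 | 2 => 1 | 3 => 3
noncomputable def sSign : Fin 4 → ℂ | 1 => -1 | _ => 1

lemma sqrt2_sq : (Real.sqrt 2 : ℂ) * (Real.sqrt 2 : ℂ) = 2 := by
  rw [← Complex.ofReal_mul, Real.mul_self_sqrt (by norm_num)]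
  norm_num

lemma had_conj (k : Fin 4) :
    hadamardGateᴴ * pauli k * hadamardGate = hSign k • pauli (hPerm k) := by
  have h2 : (Real.sqrt 2 : ℂ) ≠ 0 := by
    simpa using Complex.ofReal_ne_zero.mpr (Real.sqrt_ne_zero'.mpr (by norm_num))
  fin_cases k <;>
  · ext a b
    fin_cases a <;> fin_cases b <;>
      simp [hadamardGate, pauli, hPerm, hSign, Matrix.mul_apply, Fin.sum_univ_two,
        Matrix.conjTranspose_apply, Complex.ext_iff] <;>
      field_simp <;> ring_nf <;>
      simp [sqrt2_sq] <;> ring_nf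

lemma phase_conj (k : Fin 4) :
    phaseGateᴴ * pauli k * phaseGate = sSign k • pauli (sPerm k) := by
  fin_cases k <;>
  · ext a b
    fin_cases a <;> fin_cases b <;>
      simp [phaseGate, pauli, sPerm, sSign, Matrix.mul_apply, Fin.sum_univ_two,
        Matrix.conjTranspose_apply, Complex.ext_iff]

lemma embed_conj {n : ℕ} (g : Matrix (Fin 2) (Fin 2) ℂ) (perm : Fin 4 → Fin 4)
    (sign : Fin 4 → ℂ) (hg : ∀ k, gᴴ * pauli k * g = sign k • pauli (perm k))
    (i : Fin n) (Q : Fin n → Fin 4) :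
    (embedAt i g)ᴴ * pauliString Q * embedAt i g
      = sign (Q i) • pauliString (Function.update Q i (perm (Q i))) := by
  rw [embedAt_eq, pauliString_eq, tensorFun_conjTranspose, tensorFun_mul, tensorFun_mul]
  have h1 : (fun j => (if j = i then g else (1 : Matrix (Fin 2) (Fin 2) ℂ))ᴴ * pauli (Q j)
        * (if j = i then g else 1))
      = Function.update (fun j => pauli (Function.update Q i (perm (Q i)) j)) i
          (sign (Q i) • pauli (perm (Q i))) := by
    funext j
    by_cases hj : j = i
    · subst hj
      simp [hg (Q j)]
    · simp [hj, Function.update_of_ne hj]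
  rw [h1]
  have h2 : (fun j => pauli (Function.update Q i (perm (Q i)) j))
      = Function.update (fun j => pauli (Function.update Q i (perm (Q i)) j)) i
          (pauli (perm (Q i))) := by
    funext j
    by_cases hj : j = i
    · subst hj; simp
    · simp [Function.update_of_ne hj]
  rw [pauliString_eq, h2, ← tensorFun_smul_at]
  congr 1
  rw [Function.update_idem]

lemma trace_conj {n : ℕ} (M U ρ : MatN n) :
    (M * (U * ρ * Uᴴ)).trace = ((Uᴴ * M * U) * ρ).trace := by
  rw [show M * (U * ρ * Uᴴ) = (M * U * ρ) * Uᴴ by noncomm_ring,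
    Matrix.trace_mul_cycle]
  noncomm_ring

lemma measurable_entry {n : ℕ} (x y : Fin n → Fin 2) :
    Measurable fun ρ : MatN n => ρ x y :=
  (measurable_pi_apply y).comp (measurable_pi_apply x)

lemma measurable_traceMul {n : ℕ} (A : MatN n) :
    Measurable fun ρ : MatN n => (A * ρ).trace := by
  have h : (fun ρ : MatN n => (A * ρ).trace)
      = fun ρ => ∑ x, ∑ y, A x y * ρ y x := by
    funext ρ
    simp [Matrix.trace, Matrix.diag, Matrix.mul_apply]
  rw [h]
  exact Finset.measurable_sum _ fun x _ =>
    Finset.measurable_sum _ fun y _ => (measurable_entry y x).const_mul _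

lemma measurable_conjMap {n : ℕ} (U : MatN n) :
    Measurable fun ρ : MatN n => U * ρ * Uᴴ := by
  apply measurable_pi_lambda
  intro x
  apply measurable_pi_lambda
  intro y
  have h : (fun ρ : MatN n => (U * ρ * Uᴴ) x y)
      = fun ρ => ∑ b, (∑ a, U x a * ρ a b) * Uᴴ b y := by
    funext ρ; simp [Matrix.mul_apply]
  rw [h]
  exact Finset.measurable_sum _ fun b _ =>
    (Finset.measurable_sum _ fun a _ => (measurable_entry a b).const_mul _).mul_const _

lemma entry_bound {n : ℕ} {ρ : MatN n} (h1 : ρ.PosSemidef) (h2 : ρ.trace = 1)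
    (x y : Fin n → Fin 2) : ‖ρ x y‖ ≤ 1 := by
  obtain ⟨B, rfl⟩ : ∃ B : MatN n, ρ = Bᴴ * B := by
    open scoped MatrixOrder in
    obtain ⟨B, hB⟩ := CStarAlgebra.nonneg_iff_eq_star_mul_self.mp h1.nonneg
    exact ⟨B, hB⟩
  have diag : ∀ z, (Bᴴ * B) z z = ((∑ k, ‖B k z‖ ^ 2 : ℝ) : ℂ) := by
    intro z
    simp only [Matrix.mul_apply, Matrix.conjTranspose_apply, Complex.ofReal_sum]
    exact Finset.sum_congr rfl fun k _ => by
      rw [Complex.star_def, mul_comm, Complex.mul_conj]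
      norm_cast
      rw [Complex.normSq_eq_norm_sq]
  have tr : (∑ z, ∑ k, ‖B k z‖ ^ 2 : ℝ) = 1 := by
    have : (Bᴴ * B).trace = ((∑ z, ∑ k, ‖B k z‖ ^ 2 : ℝ) : ℂ) := by
      simp [Matrix.trace, Matrix.diag, diag]
    rw [h2] at this
    exact_mod_cast this.symm
  have hnn : ∀ z, (0:ℝ) ≤ ∑ k, ‖B k z‖ ^ 2 :=
    fun z => Finset.sum_nonneg fun k _ => sq_nonneg _
  have hle1 : ∀ z, (∑ k, ‖B k z‖ ^ 2 : ℝ) ≤ 1 := by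
    intro z
    rw [← tr]
    exact Finset.single_le_sum (f := fun z => ∑ k, ‖B k z‖ ^ 2)
      (fun w _ => hnn w) (Finset.mem_univ z)
  have hxy : ‖(Bᴴ * B) x y‖ ≤ ∑ k, ‖B k x‖ * ‖B k y‖ := by
    calc ‖(Bᴴ * B) x y‖ = ‖∑ k, star (B k x) * B k y‖ := by
          simp [Matrix.mul_apply, Matrix.conjTranspose_apply]
      _ ≤ ∑ k, ‖star (B k x) * B k y‖ := norm_sum_le _ _
      _ = ∑ k, ‖B k x‖ * ‖B k y‖ :=
          Finset.sum_congr rfl fun k _ => by rw [norm_mul, norm_star]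
  have hAM : (∑ k, ‖B k x‖ * ‖B k y‖ : ℝ) ≤ (∑ k, ‖B k x‖^2)/2 + (∑ k, ‖B k y‖^2)/2 := by
    rw [← add_div, ← Finset.sum_add_distrib]
    rw [Finset.sum_div]
    apply Finset.sum_le_sum
    intro k _
    nlinarith [sq_nonneg (‖B k x‖ - ‖B k y‖)]
  calc ‖(Bᴴ * B) x y‖ ≤ (∑ k, ‖B k x‖^2)/2 + (∑ k, ‖B k y‖^2)/2 := hxy.trans hAM
    _ ≤ 1/2 + 1/2 := by
        gcongr
        · exact hle1 x
        · exact hle1 y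
    _ = 1 := by norm_num

lemma trace_bound {n : ℕ} (A : MatN n) {ρ : MatN n} (h1 : ρ.PosSemidef) (h2 : ρ.trace = 1) :
    ‖(A * ρ).trace‖ ≤ ∑ x, ∑ y, ‖A x y‖ := by
  have h : (A * ρ).trace = ∑ x, ∑ y, A x y * ρ y x := by
    simp [Matrix.trace, Matrix.diag, Matrix.mul_apply]
  rw [h]
  calc ‖∑ x, ∑ y, A x y * ρ y x‖ ≤ ∑ x, ‖∑ y, A x y * ρ y x‖ := norm_sum_le _ _
    _ ≤ ∑ x, ∑ y, ‖A x y * ρ y x‖ := Finset.sum_le_sum fun x _ => norm_sum_le _ _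
    _ ≤ ∑ x, ∑ y, ‖A x y‖ := by
        apply Finset.sum_le_sum
        intro x _
        apply Finset.sum_le_sum
        intro y _
        rw [norm_mul]
        calc ‖A x y‖ * ‖ρ y x‖ ≤ ‖A x y‖ * 1 :=
              mul_le_mul_of_nonneg_left (entry_bound h1 h2 y x) (norm_nonneg _)
          _ = ‖A x y‖ := mul_one _

lemma integrable_tt {n : ℕ} (μ : Measure (MatN n)) [IsProbabilityMeasure μ]
    (hstate : ∀ᵐ ρ ∂μ, ρ.PosSemidef ∧ ρ.trace = 1) (A B : MatN n) :
    Integrable (fun ρ => (A * ρ).trace * (B * ρ).trace) μ := by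
  have hm := ((measurable_traceMul A).mul (measurable_traceMul B)).aestronglyMeasurable (μ := μ)
  refine (integrable_const ((∑ x, ∑ y, ‖A x y‖) * (∑ x, ∑ y, ‖B x y‖))).mono' hm ?_
  filter_upwards [hstate] with ρ hρ
  rw [norm_mul]
  exact mul_le_mul (trace_bound A hρ.1 hρ.2) (trace_bound B hρ.1 hρ.2) (norm_nonneg _)
    (Finset.sum_nonneg fun x _ => Finset.sum_nonneg fun y _ => norm_nonneg _)

/-- The basic two-point function. -/
noncomputable def TT {n : ℕ} (μ : Measure (MatN n)) (Q R : Fin n → Fin 4) : ℂ :=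
  ∫ ρ, (pauliString Q * ρ).trace * (pauliString R * ρ).trace ∂μ

lemma int_step {n : ℕ} (μ : Measure (MatN n)) (g : Matrix (Fin 2) (Fin 2) ℂ)
    (perm : Fin 4 → Fin 4) (sign : Fin 4 → ℂ)
    (hg : ∀ k, gᴴ * pauli k * g = sign k • pauli (perm k)) (i : Fin n)
    (hinv : Measure.map (fun ρ => embedAt i g * ρ * (embedAt i g)ᴴ) μ = μ)
    (Q R : Fin n → Fin 4) :
    TT μ Q R = (sign (Q i) * sign (R i)) *
      TT μ (Function.update Q i (perm (Q i))) (Function.update R i (perm (R i))) := by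
  set U := embedAt i g with hU
  have key : ∀ (M : Fin n → Fin 4) (ρ : MatN n),
      (pauliString M * (U * ρ * Uᴴ)).trace
        = sign (M i) * (pauliString (Function.update M i (perm (M i))) * ρ).trace := by
    intro M ρ
    rw [trace_conj, embed_conj g perm sign hg i M, smul_mul_assoc, Matrix.trace_smul,
      smul_eq_mul]
  have hmeas : AEStronglyMeasurable
      (fun ρ => (pauliString Q * ρ).trace * (pauliString R * ρ).trace) μ :=
    ((measurable_traceMul _).mul (measurable_traceMul _)).aestronglyMeasurable
  calc TT μ Q R
      = ∫ ρ, (pauliString Q * ρ).trace * (pauliString R * ρ).trace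
          ∂(Measure.map (fun ρ => U * ρ * Uᴴ) μ) := by unfold TT; rw [hinv]
    _ = ∫ ρ, (pauliString Q * (U * ρ * Uᴴ)).trace * (pauliString R * (U * ρ * Uᴴ)).trace ∂μ := by
        rw [integral_map (measurable_conjMap U).aemeasurable]
        rw [hinv]
        exact hmeas
    _ = ∫ ρ, (sign (Q i) * sign (R i)) •
          ((pauliString (Function.update Q i (perm (Q i))) * ρ).trace *
            (pauliString (Function.update R i (perm (R i))) * ρ).trace) ∂μ := by
        apply integral_congr_ae
        filter_upwards with ρ
        rw [key Q ρ, key R ρ, smul_eq_mul]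
        ring
    _ = (sign (Q i) * sign (R i)) *
          TT μ (Function.update Q i (perm (Q i))) (Function.update R i (perm (R i))) := by
        rw [integral_smul, smul_eq_mul, TT]

lemma zero_of_eq_neg {a : ℂ} (h : a = -a) : a = 0 :=
  add_self_eq_zero.mp (by linear_combination h)

/-- apply a word of gates (false = S, true = H) to a Pauli label -/
def applyWord : List Bool → Fin 4 → Fin 4
  | [], q => q
  | (c :: w), q => applyWord w (if c then hPerm q else sPerm q)

def word : Fin 4 → Fin 4 → List Bool
  | 1, 2 => [false]
  | 1, 3 => [true]
  | 2, 1 => [false]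
  | 2, 3 => [false, true]
  | 3, 1 => [true]
  | 3, 2 => [true, false]
  | _, _ => []

lemma word_spec : ∀ q b : Fin 4, q ≠ 0 → b ≠ 0 → applyWord (word q b) q = b := by decide

section Steps

variable {n : ℕ} (μ : Measure (MatN n)) (i : Fin n)
  (hinvH : Measure.map (fun ρ => embedAt i hadamardGate * ρ * (embedAt i hadamardGate)ᴴ) μ = μ)
  (hinvS : Measure.map (fun ρ => embedAt i phaseGate * ρ * (embedAt i phaseGate)ᴴ) μ = μ)

include hinvH hinvS

lemma step_H (Q R : Fin n → Fin 4) :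
    TT μ Q R = (hSign (Q i) * hSign (R i)) *
      TT μ (Function.update Q i (hPerm (Q i))) (Function.update R i (hPerm (R i))) :=
  int_step μ hadamardGate hPerm hSign had_conj i hinvH Q R

lemma step_S (Q R : Fin n → Fin 4) :
    TT μ Q R = (sSign (Q i) * sSign (R i)) *
      TT μ (Function.update Q i (sPerm (Q i))) (Function.update R i (sPerm (R i))) :=
  int_step μ phaseGate sPerm sSign phase_conj i hinvS Q R

lemma step_Z (Q R : Fin n → Fin 4) :
    TT μ Q R = (sSign (Q i) * sSign (sPerm (Q i)) * (sSign (R i) * sSign (sPerm (R i)))) *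
      TT μ Q R := by
  have h1 := step_S μ i hinvH hinvS Q R
  have h2 := step_S μ i hinvH hinvS (Function.update Q i (sPerm (Q i)))
    (Function.update R i (sPerm (R i)))
  simp only [Function.update_self, Function.update_idem] at h2
  have hpp : ∀ k : Fin 4, sPerm (sPerm k) = k := by decide
  rw [hpp, hpp, Function.update_eq_self, Function.update_eq_self] at h2
  linear_combination h1 + (sSign (Q i) * sSign (R i)) * h2

lemma step_X (Q R : Fin n → Fin 4) :
    TT μ Q R = ((hSign (Q i) * hSign (hPerm (Q i)) * sSign (hPerm (Q i))
        * sSign (sPerm (hPerm (Q i))))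
      * (hSign (R i) * hSign (hPerm (R i)) * sSign (hPerm (R i))
        * sSign (sPerm (hPerm (R i))))) *
      TT μ Q R := by
  have h1 := step_H μ i hinvH hinvS Q R
  have h2 := step_Z μ i hinvH hinvS (Function.update Q i (hPerm (Q i)))
    (Function.update R i (hPerm (R i)))
  simp only [Function.update_self] at h2
  have h3 := step_H μ i hinvH hinvS (Function.update Q i (hPerm (Q i)))
    (Function.update R i (hPerm (R i)))
  simp only [Function.update_self, Function.update_idem] at h3
  have hpp : ∀ k : Fin 4, hPerm (hPerm k) = k := by decide
  rw [hpp, hpp, Function.update_eq_self, Function.update_eq_self] at h3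
  linear_combination h1 + (hSign (Q i) * hSign (R i)) * h2
    + (hSign (Q i) * hSign (R i) * (sSign (hPerm (Q i)) * sSign (sPerm (hPerm (Q i)))
        * (sSign (hPerm (R i)) * sSign (sPerm (hPerm (R i)))))) * h3

lemma TT_vanish (Q R : Fin n → Fin 4) (hne : Q i ≠ R i) : TT μ Q R = 0 := by
  have hZ := step_Z μ i hinvH hinvS Q R
  have hX := step_X μ i hinvH hinvS Q R
  have h4 : ∀ q : Fin 4, q = 0 ∨ q = 1 ∨ q = 2 ∨ q = 3 := by decide
  rcases h4 (Q i) with hq | hq | hq | hq <;> rcases h4 (R i) with hr | hr | hr | hr <;>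
    first
      | exact absurd (hq.trans hr.symm) hne
      | · rw [hq, hr] at hZ
          simp only [sSign, sPerm] at hZ
          norm_num at hZ
          exact zero_of_eq_neg hZ
      | · rw [hq, hr] at hX
          simp only [hSign, hPerm, sSign, sPerm] at hX
          norm_num at hX
          exact zero_of_eq_neg hX

lemma TT_word (w : List Bool) (Q : Fin n → Fin 4) :
    TT μ Q Q = TT μ (Function.update Q i (applyWord w (Q i)))
      (Function.update Q i (applyWord w (Q i))) := by
  induction w generalizing Q with
  | nil => rw [applyWord, Function.update_eq_self]
  | cons c w ih =>
    have hs2 : ∀ k : Fin 4, sSign k * sSign k = 1 := by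
      intro k; fin_cases k <;> simp [sSign]
    have hh2 : ∀ k : Fin 4, hSign k * hSign k = 1 := by
      intro k; fin_cases k <;> simp [hSign]
    have step1 : TT μ Q Q = TT μ (Function.update Q i (if c then hPerm (Q i) else sPerm (Q i)))
        (Function.update Q i (if c then hPerm (Q i) else sPerm (Q i))) := by
      cases c
      · simpa [hs2] using step_S μ i hinvH hinvS Q Q
      · simpa [hh2] using step_H μ i hinvH hinvS Q Q
    rw [step1, ih]
    simp only [Function.update_self, Function.update_idem, applyWord]

lemma TT_move (Q : Fin n → Fin 4) (b : Fin 4) (hQ : Q i ≠ 0) (hb : b ≠ 0) :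
    TT μ Q Q = TT μ (Function.update Q i b) (Function.update Q i b) := by
  have := TT_word μ i hinvH hinvS (word (Q i) b) Q
  rwa [word_spec _ _ hQ hb] at this

end Steps

section Congr

variable {n : ℕ} (μ : Measure (MatN n))
  (hinvH : ∀ i : Fin n,
    Measure.map (fun ρ => embedAt i hadamardGate * ρ * (embedAt i hadamardGate)ᴴ) μ = μ)
  (hinvS : ∀ i : Fin n,
    Measure.map (fun ρ => embedAt i phaseGate * ρ * (embedAt i phaseGate)ᴴ) μ = μ)

include hinvH hinvS

lemma TT_congr (P : Fin n → Fin 4) :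
    ∀ (m : ℕ) (Q : Fin n → Fin 4), psupp Q = psupp P →
      (Finset.univ.filter fun i => Q i ≠ P i).card ≤ m → TT μ Q Q = TT μ P P := by
  intro m
  induction m with
  | zero =>
    intro Q hs hc
    have hQP : Q = P := by
      funext j
      by_contra hj
      have : j ∈ Finset.univ.filter fun i => Q i ≠ P i := by simp [hj]
      simpa using Finset.card_pos.mpr ⟨j, this⟩ |>.trans_le hc
    rw [hQP]
  | succ m ih =>
    intro Q hs hc
    by_cases hQP : Q = P
    · rw [hQP]
    obtain ⟨j, hj⟩ := Function.ne_iff.mp hQP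
    have hmem : ∀ k, Q k ≠ 0 ↔ P k ≠ 0 := by
      intro k
      have := Finset.ext_iff.mp hs k
      simpa [psupp] using this
    have hP0 : P j ≠ 0 := by
      intro h0
      exact hj (by rw [h0]; by_contra h; exact (hmem j).not.mpr (by simp [h0]) |>.elim (by simpa using h))
    have hQ0 : Q j ≠ 0 := (hmem j).mpr hP0
    set Q' := Function.update Q j (P j) with hQ'
    have step : TT μ Q Q = TT μ Q' Q' := TT_move μ j (hinvH j) (hinvS j) Q (P j) hQ0 hP0
    have hsupp' : psupp Q' = psupp P := by
      ext k
      by_cases hk : k = j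
      · subst hk
        simp [psupp, hQ', Function.update_self, hP0]
      · simp [psupp, hQ', Function.update_of_ne hk, hmem k]
    have hsub : (Finset.univ.filter fun i => Q' i ≠ P i)
        ⊆ (Finset.univ.filter fun i => Q i ≠ P i).erase j := by
      intro k hk
      simp only [Finset.mem_filter, Finset.mem_univ, true_and] at hk
      have hkj : k ≠ j := by
        intro h
        subst h
        exact hk (by simp [hQ'])
      exact Finset.mem_erase.mpr ⟨hkj, by
        simp only [Finset.mem_filter, Finset.mem_univ, true_and]
        rwa [hQ', Function.update_of_ne hkj] at hk⟩
    have hcard' : (Finset.univ.filter fun i => Q' i ≠ P i).card ≤ m := by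
      have h1 := Finset.card_le_card hsub
      have hjmem : j ∈ Finset.univ.filter fun i => Q i ≠ P i := by simp [hj]
      rw [Finset.card_erase_of_mem hjmem] at h1
      omega
    rw [step]
    exact ih Q' hsupp' hcard'

lemma TT_eq_of_psupp {P Q : Fin n → Fin 4} (hs : psupp Q = psupp P) :
    TT μ Q Q = TT μ P P :=
  TT_congr μ hinvH hinvS P _ Q hs le_rfl

end Congr

lemma psupp_count {n : ℕ} (P : Fin n → Fin 4) :
    (Finset.univ.filter fun Q : Fin n → Fin 4 => psupp Q = psupp P).card
      = 3 ^ (psupp P).card := by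
  have hset : (Finset.univ.filter fun Q : Fin n → Fin 4 => psupp Q = psupp P)
      = Fintype.piFinset (fun i => if i ∈ psupp P then ({1, 2, 3} : Finset (Fin 4)) else {0}) := by
    ext Q
    simp only [Finset.mem_filter, Finset.mem_univ, true_and, Fintype.mem_piFinset]
    have hmem : ∀ q : Fin 4, q ∈ ({1, 2, 3} : Finset (Fin 4)) ↔ q ≠ 0 := by decide
    constructor
    · intro h i
      by_cases hi : i ∈ psupp P
      · rw [if_pos hi, hmem]
        have : i ∈ psupp Q := h ▸ hi
        simpa [psupp] using this
      · rw [if_neg hi]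
        have : i ∉ psupp Q := h ▸ hi
        simpa [psupp] using this
    · intro h
      ext i
      have := h i
      by_cases hi : i ∈ psupp P
      · rw [if_pos hi, hmem] at this
        simp [psupp, this, hi]
        simpa [psupp] using hi
      · rw [if_neg hi] at this
        simp only [Finset.mem_singleton] at this
        simp [psupp, this]
        simpa [psupp] using hi
  rw [hset, Fintype.card_piFinset]
  rw [show (fun i => ((if i ∈ psupp P then ({1,2,3} : Finset (Fin 4)) else {0})).card)
      = fun i => if i ∈ psupp P then 3 else 1 from funext fun i => by split <;> rfl]
  rw [Finset.prod_ite_mem, Finset.univ_inter, Finset.prod_const]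

end Aux

/-- Extracting a Pauli coefficient: for `O = ∑_P α_P P` and a distribution `𝒟` over
`n`-qubit states invariant under single-qubit Hadamard and phase gates on each qubit,
`E_{ρ∼𝒟}[Tr(Oρ) Tr(Pρ)] = (2/3)^{|P|} α_P E_{ρ∼𝒟}[γ*(ρ_{dom P})]`. -/
theorem extract_pauli_coefficient (n : ℕ) (α : (Fin n → Fin 4) → ℝ)
    (O : Matrix (Fin n → Fin 2) (Fin n → Fin 2) ℂ)
    (hO : O = ∑ P : Fin n → Fin 4, (α P : ℂ) • pauliString P)
    (μ : Measure (Matrix (Fin n → Fin 2) (Fin n → Fin 2) ℂ)) [IsProbabilityMeasure μ]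
    (hstate : ∀ᵐ ρ ∂μ, ρ.PosSemidef ∧ ρ.trace = 1)
    (hinvH : ∀ i : Fin n,
      Measure.map (fun ρ => embedAt i hadamardGate * ρ * (embedAt i hadamardGate)ᴴ) μ = μ)
    (hinvS : ∀ i : Fin n,
      Measure.map (fun ρ => embedAt i phaseGate * ρ * (embedAt i phaseGate)ᴴ) μ = μ)
    (P : Fin n → Fin 4) :
    ∫ ρ, (O * ρ).trace * (pauliString P * ρ).trace ∂μ =
      (2 / 3 : ℂ) ^ (psupp P).card * (α P : ℂ) * ∫ ρ, nonIdentityPurity P ρ ∂μ := by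
  classical
  have hTT : ∀ A B : Fin n → Fin 4,
      Integrable (fun ρ => (pauliString A * ρ).trace * (pauliString B * ρ).trace) μ :=
    fun A B => integrable_tt μ hstate _ _
  set k := (psupp P).card with hk
  -- Left-hand side
  have hL : ∫ ρ, (O * ρ).trace * (pauliString P * ρ).trace ∂μ = (α P : ℂ) * TT μ P P := by
    have h1 : ∀ ρ : MatN n, (O * ρ).trace * (pauliString P * ρ).trace
        = ∑ Q : Fin n → Fin 4,
            (α Q : ℂ) • ((pauliString Q * ρ).trace * (pauliString P * ρ).trace) := by
      intro ρ
      rw [hO, Finset.sum_mul, Matrix.trace_sum, Finset.sum_mul]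
      exact Finset.sum_congr rfl fun Q _ => by
        rw [smul_mul_assoc, Matrix.trace_smul, smul_eq_mul, smul_eq_mul, mul_assoc]
    rw [integral_congr_ae (Filter.Eventually.of_forall h1)]
    rw [integral_finset_sum (f := fun (Q : Fin n → Fin 4) (ρ : MatN n) =>
        (α Q : ℂ) • ((pauliString Q * ρ).trace * (pauliString P * ρ).trace))
      _ (fun Q _ => by simpa only [smul_eq_mul] using (hTT Q P).const_mul ((α Q : ℂ)))]
    simp_rw [integral_smul]
    rw [Finset.sum_eq_single P]
    · rw [smul_eq_mul]; rfl
    · intro Q _ hQP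
      obtain ⟨i, hi⟩ := Function.ne_iff.mp hQP
      have := TT_vanish μ i (hinvH i) (hinvS i) Q P hi
      rw [show (∫ ρ, (pauliString Q * ρ).trace * (pauliString P * ρ).trace ∂μ) = TT μ Q P from rfl,
        this, smul_zero]
    · intro h
      exact absurd (Finset.mem_univ P) h
  -- Right-hand side
  have hR : ∫ ρ, nonIdentityPurity P ρ ∂μ
      = (2 ^ k : ℂ)⁻¹ * ((3 ^ k : ℂ) * TT μ P P) := by
    unfold nonIdentityPurity
    rw [← hk]
    simp_rw [← smul_eq_mul (a := (2 ^ k : ℂ)⁻¹)]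
    rw [integral_smul]
    have hint : ∀ Q ∈ (Finset.univ : Finset (Fin n → Fin 4)), Integrable
        (fun ρ => if psupp Q = psupp P then ((pauliString Q * ρ).trace) ^ 2 else 0) μ := by
      intro Q _
      by_cases hc : psupp Q = psupp P
      · simp only [if_pos hc]
        simpa [sq] using hTT Q Q
      · simp only [if_neg hc]
        exact integrable_const 0
    rw [integral_finset_sum _ hint]
    have h2 : ∀ Q : Fin n → Fin 4,
        (∫ ρ, if psupp Q = psupp P then ((pauliString Q * ρ).trace) ^ 2 else 0 ∂μ)
          = if psupp Q = psupp P then TT μ Q Q else 0 := by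
      intro Q
      by_cases hc : psupp Q = psupp P
      · simp only [if_pos hc]
        unfold TT
        exact integral_congr_ae (Filter.Eventually.of_forall fun ρ => pow_two _)
      · simp [if_neg hc]
    simp_rw [h2]
    rw [← Finset.sum_filter]
    have h3 : ∀ Q ∈ Finset.univ.filter fun Q : Fin n → Fin 4 => psupp Q = psupp P,
        TT μ Q Q = TT μ P P := fun Q hQ =>
      TT_eq_of_psupp μ hinvH hinvS (Finset.mem_filter.mp hQ).2
    rw [Finset.sum_congr rfl h3, Finset.sum_const, psupp_count, smul_eq_mul, nsmul_eq_mul]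
    push_cast
    rw [smul_eq_mul]
  rw [hL, hR]
  have h2 : (2 : ℂ) ^ k ≠ 0 := pow_ne_zero _ two_ne_zero
  have h3 : (3 : ℂ) ^ k ≠ 0 := pow_ne_zero _ three_ne_zero
  rw [div_pow]
  field_simp
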